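/- Every connected graph G on n ≥ 4 vertices in which all cycles are triangles, every cycle pair shares at most one vertex, and whose number of edges is maximal among connected cacti on n vertices, has at most one vertex of degree at most 1; furthermore if G has two or more vertices of degree ≥ 3, then some two vertices of degree ≥ 3 are adjacent. -/

import Mathlib

open SimpleGraph Finset

open scoped Classical in
/-- The adjacency matrix of a graph over `ℝ` (using classical decidability). -/
noncomputable def adjMat {V : Type*} [Fintype V] [DecidableEq V] (G : SimpleGraph V) :
    Matrix V V ℝ :=
  fun a b => if G.Adj a b then 1 else 0

theorem adjMat_isHermitian {V : Type*} [Fintype V] [DecidableEq V] (G : SimpleGraph V) :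
    (adjMat G).IsHermitian := by
  ext a b
  rw [Matrix.conjTranspose_apply]
  by_cases h : G.Adj a b
  · simp [adjMat, h, h.symm]
  · simp [adjMat, h, mt (fun h' : G.Adj b a => h'.symm) h]

/-- The spectral radius (specRad) (largest adjacency eigenvalue) of a graph. -/
noncomputable def specRad {V : Type*} [Fintype V] [DecidableEq V]
    (G : SimpleGraph V) : ℝ :=
  ⨆ a : V, (adjMat_isHermitian G).eigenvalues a

/-- A cactus: any two distinct cycles (distinct as edge sets) share at most one vertex. -/
def IsCactus {V : Type*} [DecidableEq V] (G : SimpleGraph V) : Prop :=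
  ∀ ⦃u v : V⦄ (c₁ : G.Walk u u) (c₂ : G.Walk v v), c₁.IsCycle → c₂.IsCycle →
    c₁.edges.toFinset ≠ c₂.edges.toFinset →
      (c₁.support.toFinset ∩ c₂.support.toFinset).card ≤ 1

/-- A unicyclic graph: connected with exactly one cycle (one cycle edge set). -/
def Unicyclic {V : Type*} [DecidableEq V] (G : SimpleGraph V) : Prop :=
  G.Connected ∧ ∃! E : Finset (Sym2 V), ∃ (w : V) (c : G.Walk w w),
    c.IsCycle ∧ c.edges.toFinset = E

/-- The star `K_{1,n-1}` on `Fin n` with center `0`. -/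
def starGraph (n : ℕ) : SimpleGraph (Fin n) where
  Adj a b := a ≠ b ∧ ((a : ℕ) = 0 ∨ (b : ℕ) = 0)
  symm := by constructor; tauto
  loopless := by constructor; tauto

/-- `K_{1,n-1}^+`: the star plus one edge between the leaves `1` and `2`. -/
def starPlus (n : ℕ) : SimpleGraph (Fin n) where
  Adj a b := a ≠ b ∧ ((a : ℕ) = 0 ∨ (b : ℕ) = 0 ∨ ((a : ℕ) ≤ 2 ∧ (b : ℕ) ≤ 2))
  symm := by constructor; tauto
  loopless := by constructor; tauto

/-- `H_n`: the star `K_{1,n-1}` plus `⌊(n-1)/2⌋` independent edges `(1,2), (3,4), …`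
between pairs of leaves. -/
def Hgraph (n : ℕ) : SimpleGraph (Fin n) where
  Adj a b := a ≠ b ∧ ((a : ℕ) = 0 ∨ (b : ℕ) = 0 ∨
    ((a : ℕ) % 2 = 1 ∧ (b : ℕ) = a + 1) ∨ ((b : ℕ) % 2 = 1 ∧ (a : ℕ) = b + 1))
  symm := by constructor; tauto
  loopless := by constructor; tauto

/-- Rewiring: delete the edges `v w` and add the edges `u w` for `w ∈ S`. -/
def rewire {V : Type*} (G : SimpleGraph V) (u v : V) (S : Set V) : SimpleGraph V :=
  SimpleGraph.fromEdgeSet ((G.edgeSet \ {e | ∃ w ∈ S, e = s(v, w)}) ∪ {e | ∃ w ∈ S, e = s(u, w)})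

/-- An edge lies in a triangle of `G`. -/
def InTriangle {V : Type*} (G : SimpleGraph V) (e : Sym2 V) : Prop :=
  ∃ a b c : V, G.Adj a b ∧ G.Adj b c ∧ G.Adj a c ∧
    (e = s(a, b) ∨ e = s(b, c) ∨ e = s(a, c))


namespace CactusAux
variable {V : Type*} {G : SimpleGraph V}
open SimpleGraph.Walk

/-- If a walk with nodup support starting at `a` contains the edge `s(a,z)`,
then it starts with that edge. -/
lemma head_edge_of_nodup {a b z : V} (p : G.Walk a b) (hnd : p.support.Nodup)
    (hz : s(a,z) ∈ p.edges) : ∃ (h : G.Adj a z) (q : G.Walk z b), p = Walk.cons h q := by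
  cases p with
  | nil => simp at hz
  | @cons _ y _ h q =>
    rw [Walk.edges_cons, List.mem_cons] at hz
    rcases hz with hz | hz
    · have hzy : z = y := by
        rcases Sym2.eq_iff.mp hz with ⟨-, rfl⟩ | ⟨h1, h2⟩
        · rfl
        · exact absurd (h1 ▸ h) (G.loopless.irrefl _)
      subst hzy
      exact ⟨h, q, rfl⟩
    · exfalso
      have := q.fst_mem_support_of_mem_edges hz
      rw [Walk.support_cons] at hnd
      exact (List.nodup_cons.mp hnd).1 this

lemma end_mem_tail_of_closed {v : V} (c : G.Walk v v) (hc : ¬ c.Nil) :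
    v ∈ c.support.tail := by
  cases c with
  | nil => simp at hc
  | cons h q => simpa using q.end_mem_support

lemma closed_support_toFinset [DecidableEq V] {v : V} (c : G.Walk v v) (hc : ¬ c.Nil) :
    c.support.toFinset = c.support.tail.toFinset := by
  cases c with
  | nil => simp at hc
  | cons h q =>
    simp only [Walk.support_cons, List.toFinset_cons, List.tail_cons]
    exact Finset.insert_eq_self.mpr (by simpa using q.end_mem_support)

end CactusAux

namespace CactusAux
variable {V : Type*} {G : SimpleGraph V}
open SimpleGraph.Walk

lemma cycle_not_nil {v : V} {c : G.Walk v v} (hc : c.IsCycle) : ¬ c.Nil := by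
  have := hc.three_le_length
  rw [Walk.not_nil_iff_lt_length]; omega

lemma rotate_support_toFinset [DecidableEq V] {v m : V} {c : G.Walk v v} (hc : c.IsCycle)
    (hm : m ∈ c.support) : (c.rotate _ hm).support.toFinset = c.support.toFinset := by
  rw [closed_support_toFinset _ (cycle_not_nil (hc.rotate hm)),
    closed_support_toFinset _ (cycle_not_nil hc)]
  exact List.toFinset_eq_of_perm _ _ (c.support_rotate _ hm).perm

lemma rotate_edges_toFinset [DecidableEq V] {v m : V} (c : G.Walk v v)
    (hm : m ∈ c.support) : (c.rotate _ hm).edges.toFinset = c.edges.toFinset :=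
  List.toFinset_eq_of_perm _ _ (c.rotate_edges _ hm).perm

lemma reverse_support_toFinset [DecidableEq V] {v w : V} (c : G.Walk v w) :
    c.reverse.support.toFinset = c.support.toFinset := by
  rw [Walk.support_reverse, List.toFinset_reverse]

lemma reverse_edges_toFinset [DecidableEq V] {v w : V} (c : G.Walk v w) :
    c.reverse.edges.toFinset = c.edges.toFinset := by
  rw [Walk.edges_reverse, List.toFinset_reverse]

/-- decomposition of a length-3 walk -/
lemma walk_len3 {a b : V} (w : G.Walk a b) (h3 : w.length = 3) :
    ∃ (p q : V) (h1 : G.Adj a p) (h2 : G.Adj p q) (h3 : G.Adj q b),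
      w = Walk.cons h1 (Walk.cons h2 (Walk.cons h3 Walk.nil)) := by
  cases w with
  | nil => simp at h3
  | cons h1 w =>
    cases w with
    | nil => simp at h3
    | cons h2 w =>
      cases w with
      | nil => simp at h3
      | cons h3' w =>
        cases w with
        | nil => exact ⟨_, _, h1, h2, h3', rfl⟩
        | cons h4 w => simp [Walk.length_cons] at h3

end CactusAux

namespace CactusAux
variable {V : Type*} {G : SimpleGraph V}
open SimpleGraph.Walk

/-- In a graph all of whose cycles are triangles, any cycle through `m` is a triangle
`m p q` with explicit support and edge finsets. -/
lemma cycle_structure [DecidableEq V]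
    (htri : ∀ (w : V) (c : G.Walk w w), c.IsCycle → c.length = 3)
    {w m : V} {c : G.Walk w w} (hc : c.IsCycle) (hm : m ∈ c.support) :
    ∃ p q : V, p ≠ q ∧ m ≠ p ∧ m ≠ q ∧ G.Adj m p ∧ G.Adj p q ∧ G.Adj q m ∧
      c.support.toFinset = {m, p, q} ∧
      c.edges.toFinset = {s(m,p), s(p,q), s(q,m)} := by
  have hcy : (c.rotate _ hm).IsCycle := hc.rotate hm
  have hlen : (c.rotate _ hm).length = 3 := htri _ _ hcy
  obtain ⟨p, q, h1, h2, h3, hdec⟩ := walk_len3 (c.rotate _ hm) hlen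
  have hnd : (c.rotate _ hm).support.tail.Nodup := (Walk.isCycle_def _ |>.mp hcy).2.2
  rw [hdec] at hnd
  simp only [Walk.support_cons, Walk.support_nil, List.tail_cons, List.nodup_cons,
    List.mem_cons, List.mem_singleton, List.nodup_nil] at hnd
  push_neg at hnd
  have hpq : p ≠ q := by tauto
  have hpm : p ≠ m := by tauto
  have hqm : q ≠ m := by tauto
  refine ⟨p, q, hpq, fun h => hpm h.symm, fun h => hqm h.symm, h1, h2, h3, ?_, ?_⟩
  · rw [← rotate_support_toFinset hc hm, hdec]
    ext t
    simp only [Walk.support_cons, Walk.support_nil, List.toFinset_cons, List.toFinset_nil,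
      Finset.mem_insert, Finset.mem_singleton, insert_empty_eq]
    constructor
    · rintro (rfl | rfl | rfl | rfl) <;> tauto
    · rintro (rfl | rfl | rfl) <;> tauto
  · rw [← rotate_edges_toFinset c hm, hdec]
    simp [Walk.edges_cons]
end CactusAux

namespace CactusAux
variable {V : Type*} {G : SimpleGraph V}
open SimpleGraph.Walk

lemma internal_two_nbrs [DecidableEq V] {a b m : V} {p : G.Walk a b} (hp : p.IsPath) (hm : m ∈ p.support)
    (hma : m ≠ a) (hmb : m ≠ b) : ∃ y z : V, y ≠ z ∧ G.Adj m y ∧ G.Adj m z := by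
  have hq : (p.takeUntil m hm).IsPath := hp.takeUntil hm
  have hr : (p.dropUntil m hm).IsPath := hp.dropUntil hm
  obtain ⟨y, hy, q₂, hq2⟩ := Walk.exists_eq_cons_of_ne hma ((p.takeUntil m hm).reverse)
  obtain ⟨z, hz, r₂, hr2⟩ := Walk.exists_eq_cons_of_ne hmb (p.dropUntil m hm)
  refine ⟨y, z, fun hyz => ?_, hy, hz⟩
  subst hyz
  have hnd : (((p.takeUntil m hm).support) ++ ((p.dropUntil m hm).support.tail)).Nodup := by
    rw [← Walk.support_append, Walk.take_spec p hm]
    exact hp.support_nodup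
  have hy1 : y ∈ (p.takeUntil m hm).support := by
    rw [← List.mem_reverse, ← Walk.support_reverse, hq2]
    simp
  have hy2 : y ∈ (p.dropUntil m hm).support.tail := by
    rw [hr2]
    simpa using r₂.start_mem_support
  exact (List.disjoint_of_nodup_append hnd) hy1 hy2

lemma path_between_structure [DecidableEq V]
    (htri : ∀ (w : V) (c : G.Walk w w), c.IsCycle → c.length = 3)
    {x0 x1 x2 : V} (h01 : G.Adj x1 x0) (h12 : G.Adj x1 x2)
    (h02ne : x0 ≠ x2) (hna : ¬ G.Adj x0 x2)
    (hnb : ∀ t, G.Adj x1 t → t = x0 ∨ t = x2)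
    (p : G.Walk x0 x2) (hp : p.IsPath) :
    p.support = [x0, x1, x2] ∧ p.edges = [s(x0,x1), s(x1,x2)] := by
  by_cases hm : x1 ∈ p.support
  · -- x1 on the path: path must be exactly x0-x1-x2
    have hq : (p.takeUntil x1 hm).IsPath := hp.takeUntil hm
    have hr : (p.dropUntil x1 hm).IsPath := hp.dropUntil hm
    have hnd : (((p.takeUntil x1 hm).support) ++ ((p.dropUntil x1 hm).support.tail)).Nodup := by
      rw [← Walk.support_append, Walk.take_spec p hm]
      exact hp.support_nodup
    have hdisj := List.disjoint_of_nodup_append hnd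
    obtain ⟨y, hy, q₂, hq2⟩ := Walk.exists_eq_cons_of_ne h01.ne ((p.takeUntil x1 hm).reverse)
    obtain ⟨z, hz, r₂, hr2⟩ := Walk.exists_eq_cons_of_ne h12.ne (p.dropUntil x1 hm)
    have hymem : y ∈ (p.takeUntil x1 hm).support := by
      rw [← List.mem_reverse, ← Walk.support_reverse, hq2]; simp
    have hzmem : z ∈ (p.dropUntil x1 hm).support.tail := by
      rw [hr2]; simpa using r₂.start_mem_support
    have hyx0 : y = x0 := by
      rcases hnb y hy with h | h
      · exact h
      · exact absurd (hdisj (h ▸ hymem) (end_mem_tail_support_of_ne h12.ne _)) not_false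
    have hzx2 : z = x2 := by
      rcases hnb z hz with h | h
      · exact absurd (hdisj (p.takeUntil x1 hm).start_mem_support (h ▸ hzmem)) not_false
      · exact h
    have hyx0' : x0 = y := hyx0.symm
    have hzx2' : x2 = z := hzx2.symm
    subst hyx0'
    subst hzx2'
    have hq2nil : q₂ = Walk.nil := by
      have hqq : q₂.IsPath := by
        have := hq.reverse
        rw [hq2, Walk.cons_isPath_iff] at this
        exact this.1
      exact Walk.isPath_iff_eq_nil.mp hqq
    have hr2nil : r₂ = Walk.nil := by
      have hrr : r₂.IsPath := by
        rw [hr2, Walk.cons_isPath_iff] at hr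
        exact hr.1
      exact Walk.isPath_iff_eq_nil.mp hrr
    have hqsup : (p.takeUntil x1 hm).support = [x0, x1] := by
      have h1 := congrArg Walk.support hq2
      rw [Walk.support_reverse] at h1
      have h2 := congrArg List.reverse h1
      rw [hq2nil] at h2
      simp at h2
      rw [h2]
    have hqedg : (p.takeUntil x1 hm).edges = [s(x0,x1)] := by
      have h1 := congrArg Walk.edges hq2
      rw [Walk.edges_reverse] at h1
      have h2 := congrArg List.reverse h1
      rw [hq2nil] at h2
      simp at h2
      rw [h2, Sym2.eq_swap]
    have hrsup : (p.dropUntil x1 hm).support = [x1, x2] := by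
      rw [hr2, hr2nil]; simp
    have hredg : (p.dropUntil x1 hm).edges = [s(x1,x2)] := by
      rw [hr2, hr2nil]; simp
    constructor
    · rw [← Walk.take_spec p hm, Walk.support_append, hqsup, hrsup]
      simp
    · rw [← Walk.take_spec p hm, Walk.edges_append, hqedg, hredg]
      simp
  · -- x1 not on the path: closing up gives a too-long cycle
    exfalso
    have hconsp : (Walk.cons h01 p).IsPath := (Walk.cons_isPath_iff _ _).mpr ⟨hp, hm⟩
    have hcyc : (Walk.cons h12.symm (Walk.cons h01 p)).IsCycle := by
      rw [Walk.cons_isCycle_iff]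
      refine ⟨hconsp, ?_⟩
      rw [Walk.edges_cons, List.mem_cons]
      push_neg
      constructor
      · intro h
        rcases Sym2.eq_iff.mp h with ⟨h1, -⟩ | ⟨h1, -⟩
        · exact h12.ne' h1
        · exact h02ne h1.symm
      · intro h
        rw [Sym2.eq_swap] at h
        exact hm (p.fst_mem_support_of_mem_edges h)
    have := htri _ _ hcyc
    simp only [Walk.length_cons] at this
    have hp1 : p.length = 1 := by omega
    cases p with
    | nil => simp at hp1
    | cons h q =>
      cases q with
      | nil => exact hna h
      | cons h' q' => simp [Walk.length_cons] at hp1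
end CactusAux

namespace CactusAux
variable {V : Type*} {G : SimpleGraph V}
open SimpleGraph.Walk

lemma isCycle_reverse {v : V} {c : G.Walk v v} (hc : c.IsCycle) : c.reverse.IsCycle := by
  rw [Walk.isCycle_def] at hc ⊢
  obtain ⟨ht, hne, hnd⟩ := hc
  refine ⟨ht.reverse _, fun h => hne (by simpa using congrArg Walk.reverse h), ?_⟩
  have hnenil : c.support.tail ≠ [] := by
    intro h
    cases c with
    | nil => exact hne rfl
    | cons h' q => simp only [Walk.support_cons, List.tail_cons] at h; exact q.support_ne_nil h
  obtain ⟨t', ht'⟩ : ∃ t', c.support.tail = t' ++ [v] := by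
    refine ⟨c.support.tail.dropLast, ?_⟩
    have h1 := List.dropLast_append_getLast hnenil
    have h2 : c.support.tail.getLast hnenil = v := by
      rw [List.getLast_tail]
      exact c.getLast_support
    rw [h2] at h1
    exact h1.symm
  have hsup : c.reverse.support = v :: (t'.reverse ++ [v]) := by
    rw [Walk.support_reverse, c.support_eq_cons, ht']
    simp
  rw [hsup]
  simp only [List.tail_cons]
  rw [ht'] at hnd
  simp only [List.nodup_append, List.nodup_reverse, List.nodup_singleton] at hnd ⊢
  constructor
  · exact hnd.1
  · refine ⟨trivial, ?_⟩
    intro a ha b hb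
    rw [List.mem_reverse] at ha
    rw [List.mem_singleton] at hb
    subst hb
    rcases hnd with ⟨-, -, hd⟩
    exact hd a ha _ (List.mem_singleton_self _)
end CactusAux

namespace CactusAux
variable {V : Type*} [DecidableEq V] {G : SimpleGraph V}
open SimpleGraph.Walk

lemma addEdge_edgeSet {x0 x2 : V} (hne : x0 ≠ x2) :
    (SimpleGraph.fromEdgeSet (G.edgeSet ∪ {s(x0,x2)})).edgeSet = G.edgeSet ∪ {s(x0,x2)} := by
  rw [SimpleGraph.edgeSet_fromEdgeSet]
  ext e
  simp only [Set.mem_diff, Set.mem_union, Set.mem_singleton_iff, Set.mem_setOf_eq]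
  constructor
  · tauto
  · rintro (h | rfl)
    · exact ⟨Or.inl h, G.not_isDiag_of_mem_edgeSet h⟩
    · exact ⟨Or.inr rfl, by simpa using hne⟩

section AddEdgeB
variable (htri : ∀ (w : V) (c : G.Walk w w), c.IsCycle → c.length = 3)
variable {x0 x1 x2 : V} (h01 : G.Adj x1 x0) (h12 : G.Adj x1 x2)
  (h02ne : x0 ≠ x2) (hna : ¬ G.Adj x0 x2) (hnb : ∀ t, G.Adj x1 t → t = x0 ∨ t = x2)

local notation "H" => SimpleGraph.fromEdgeSet (G.edgeSet ∪ {s(x0,x2)})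

include htri h01 h12 h02ne hna hnb in
lemma addEdge_tri_cycle (h : (H).Adj x0 x2) (rest : (H).Walk x2 x0)
    (hcyc : (Walk.cons h rest).IsCycle) :
    (Walk.cons h rest).support.toFinset = ({x0,x1,x2} : Finset V) ∧
    (Walk.cons h rest).edges.toFinset = ({s(x0,x1), s(x1,x2), s(x0,x2)} : Finset (Sym2 V)) := by
  obtain ⟨hrp, hre⟩ := (Walk.cons_isCycle_iff rest h).mp hcyc
  have hGedges : ∀ e ∈ rest.edges, e ∈ G.edgeSet := by
    intro e hee
    have h1 := rest.edges_subset_edgeSet hee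
    rw [addEdge_edgeSet h02ne] at h1
    rcases h1 with h1 | h1
    · exact h1
    · rw [Set.mem_singleton_iff] at h1
      subst h1
      exact absurd hee hre
  set rg := rest.transfer G hGedges with hrg
  have hrgp : rg.IsPath := by
    rw [Walk.isPath_def, hrg, Walk.support_transfer]
    exact hrp.support_nodup
  have hB := path_between_structure htri h01 h12 h02ne hna hnb rg.reverse hrgp.reverse
  have hsup : rest.support = [x2, x1, x0] := by
    have h1 : rg.support = [x0,x1,x2].reverse := by
      rw [← List.reverse_reverse rg.support, ← Walk.support_reverse, hB.1]
    rw [← Walk.support_transfer rest hGedges, ← hrg, h1]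
    rfl
  have hedg : rest.edges.toFinset = ({s(x0,x1), s(x1,x2)} : Finset (Sym2 V)) := by
    have h1 : rg.edges = [s(x0,x1), s(x1,x2)].reverse := by
      rw [← List.reverse_reverse rg.edges, ← Walk.edges_reverse, hB.2]
    have h2 : rest.edges = [s(x1,x2), s(x0,x1)] := by
      rw [← Walk.edges_transfer rest hGedges, ← hrg, h1]
      rfl
    rw [h2]
    ext e; simp; tauto
  constructor
  · rw [Walk.support_cons, hsup]
    ext t; simp; tauto
  · rw [Walk.edges_cons, List.toFinset_cons, hedg]
    ext e
    simp only [Finset.mem_insert, Finset.mem_singleton]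
    constructor
    · rintro (rfl | rfl | rfl) <;> tauto
    · rintro (rfl | rfl | rfl)
      · tauto
      · tauto
      · left; rfl

include htri h01 h12 h02ne hna hnb in
lemma addEdge_cycle_classify {w : V} (c : (H).Walk w w) (hc : c.IsCycle) :
    (∀ e ∈ c.edges, e ∈ G.edgeSet) ∨
    (c.support.toFinset = ({x0,x1,x2} : Finset V) ∧
     c.edges.toFinset = ({s(x0,x1), s(x1,x2), s(x0,x2)} : Finset (Sym2 V))) := by
  by_cases he : s(x0,x2) ∈ c.edges
  · right
    have hx0 : x0 ∈ c.support := c.fst_mem_support_of_mem_edges he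
    have hcr : (c.rotate _ hx0).IsCycle := hc.rotate hx0
    have her : s(x0,x2) ∈ (c.rotate _ hx0).edges := (c.rotate_edges _ hx0).mem_iff.mpr he
    rw [← rotate_support_toFinset hc hx0, ← rotate_edges_toFinset c hx0]
    set c1 := c.rotate _ hx0 with hc1def
    clear_value c1
    clear hc1def he hx0 hc
    cases c1 with
    | nil => exact absurd hcr (by simp [Walk.isCycle_def])
    | @cons _ y _ h rest =>
      by_cases hy : y = x2
      · subst hy
        exact addEdge_tri_cycle htri h01 h12 h02ne hna hnb h rest hcr
      · obtain ⟨hrp, hre⟩ := (Walk.cons_isCycle_iff rest h).mp hcr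
        have he2 : s(x0,x2) ∈ rest.edges := by
          rcases List.mem_cons.mp her with h' | h'
          · exfalso
            rcases Sym2.eq_iff.mp h' with ⟨-, h''⟩ | ⟨-, h''⟩
            · exact hy h''.symm
            · exact h02ne h''.symm
          · exact h'
        have hrev : s(x0,x2) ∈ rest.reverse.edges := by
          rw [Walk.edges_reverse, List.mem_reverse]; exact he2
        obtain ⟨h2, q, hq⟩ := head_edge_of_nodup rest.reverse hrp.reverse.support_nodup hrev
        have hc2 : (Walk.cons h rest).reverse = Walk.cons h2 (q.append (Walk.cons h.symm Walk.nil)) := by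
          rw [Walk.reverse_cons, hq, Walk.cons_append]
        have hcyc2 : (Walk.cons h2 (q.append (Walk.cons h.symm Walk.nil))).IsCycle := by
          rw [← hc2]; exact isCycle_reverse hcr
        have hres := addEdge_tri_cycle htri h01 h12 h02ne hna hnb h2 _ hcyc2
        rw [← reverse_support_toFinset (Walk.cons h rest),
          ← reverse_edges_toFinset (Walk.cons h rest), hc2]
        exact hres
  · left
    intro e hee
    have h1 := c.edges_subset_edgeSet hee
    rw [addEdge_edgeSet h02ne] at h1
    rcases h1 with h1 | h1
    · exact h1
    · rw [Set.mem_singleton_iff] at h1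
      subst h1
      exact absurd hee he

include htri hnb hna in
lemma addEdge_no_x1 {w : V} (c : G.Walk w w) (hc : c.IsCycle) : x1 ∉ c.support := by
  intro hm
  obtain ⟨p, q, hpq, -, -, hmp, hpq2, hqm, -, -⟩ := cycle_structure htri hc hm
  rcases hnb p hmp with rfl | rfl
  · rcases hnb q hqm.symm with rfl | rfl
    · exact hpq rfl
    · exact hna hpq2
  · rcases hnb q hqm.symm with rfl | rfl
    · exact hna hpq2.symm
    · exact hpq rfl

include htri h02ne hna in
lemma addEdge_no_both {w : V} (c : G.Walk w w) (hc : c.IsCycle) (h0 : x0 ∈ c.support) :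
    x2 ∉ c.support := by
  intro h2m
  obtain ⟨p, q, hpq, hmp, hmq, hap, hapq, haq, hsup, -⟩ := cycle_structure htri hc h0
  have hmem : x2 ∈ ({x0, p, q} : Finset V) := by
    rw [← hsup]; exact List.mem_toFinset.mpr h2m
  simp only [Finset.mem_insert, Finset.mem_singleton] at hmem
  rcases hmem with h | h | h
  · exact h02ne h.symm
  · rw [← h] at hap; exact hna hap
  · rw [← h] at haq; exact hna haq.symm

include htri h01 h12 h02ne hna hnb in
lemma addEdge_cross {a : V} (c : G.Walk a a) (hc : c.IsCycle) :
    (c.support.toFinset ∩ ({x0,x1,x2} : Finset V)).card ≤ 1 := by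
  have hx1 := addEdge_no_x1 htri hna hnb c hc
  by_cases h0 : x0 ∈ c.support
  · have hx2 := addEdge_no_both htri h02ne hna c hc h0
    refine le_trans (Finset.card_le_card (fun t ht => ?_)) (Finset.card_singleton x0).le
    rw [Finset.mem_inter, List.mem_toFinset] at ht
    obtain ⟨hts, htm⟩ := ht
    simp only [Finset.mem_insert, Finset.mem_singleton] at htm
    rw [Finset.mem_singleton]
    rcases htm with h | h | h
    · exact h
    · exact absurd (h ▸ hts) hx1
    · exact absurd (h ▸ hts) hx2
  · refine le_trans (Finset.card_le_card (fun t ht => ?_))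
      (Finset.card_singleton (a := x2)).le
    rw [Finset.mem_inter, List.mem_toFinset] at ht
    obtain ⟨hts, htm⟩ := ht
    simp only [Finset.mem_insert, Finset.mem_singleton] at htm
    rw [Finset.mem_singleton]
    rcases htm with h | h | h
    · exact absurd (h ▸ hts) h0
    · exact absurd (h ▸ hts) hx1
    · exact h

include htri h01 h12 h02ne hna hnb in
lemma addEdge_isCactus
    (hcac : ∀ ⦃a b : V⦄ (c₁ : G.Walk a a) (c₂ : G.Walk b b), c₁.IsCycle → c₂.IsCycle →
      c₁.edges.toFinset ≠ c₂.edges.toFinset →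
      (c₁.support.toFinset ∩ c₂.support.toFinset).card ≤ 1) :
    ∀ ⦃a b : V⦄ (c₁ : (H).Walk a a) (c₂ : (H).Walk b b), c₁.IsCycle → c₂.IsCycle →
      c₁.edges.toFinset ≠ c₂.edges.toFinset →
      (c₁.support.toFinset ∩ c₂.support.toFinset).card ≤ 1 := by
  intro a b c₁ c₂ h1 h2 hne
  rcases addEdge_cycle_classify htri h01 h12 h02ne hna hnb c₁ h1 with hl1 | hr1 <;>
    rcases addEdge_cycle_classify htri h01 h12 h02ne hna hnb c₂ h2 with hl2 | hr2
  · have := hcac (c₁.transfer G hl1) (c₂.transfer G hl2) (h1.transfer hl1) (h2.transfer hl2)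
      (by rw [Walk.edges_transfer, Walk.edges_transfer]; exact hne)
    rwa [Walk.support_transfer, Walk.support_transfer] at this
  · rw [hr2.1, ← Walk.support_transfer c₁ hl1]
    exact addEdge_cross htri h01 h12 h02ne hna hnb _ (h1.transfer hl1)
  · rw [hr1.1, Finset.inter_comm, ← Walk.support_transfer c₂ hl2]
    exact addEdge_cross htri h01 h12 h02ne hna hnb _ (h2.transfer hl2)
  · exact absurd (hr1.2.trans hr2.2.symm) hne

end AddEdgeB
end CactusAux

namespace CactusAux
variable {V : Type*} [DecidableEq V] {G : SimpleGraph V}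
open SimpleGraph.Walk

lemma cycle_two_nbrs {m w : V} {c : G.Walk w w} (hc : c.IsCycle) (hm : m ∈ c.support) :
    ∃ y z : V, y ≠ z ∧ G.Adj m y ∧ G.Adj m z := by
  have hc1 : (c.rotate _ hm).IsCycle := hc.rotate hm
  set c1 := c.rotate _ hm with hdef
  clear_value c1
  clear hdef hc
  cases c1 with
  | nil => exact absurd hc1 (by simp [Walk.isCycle_def])
  | @cons _ y _ h rest =>
    obtain ⟨hrp, hre⟩ := (Walk.cons_isCycle_iff rest h).mp hc1
    obtain ⟨z, hz, q, hq⟩ := Walk.exists_eq_cons_of_ne h.ne rest.reverse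
    refine ⟨y, z, fun hyz => ?_, h, hz⟩
    apply hre
    have : s(m,z) ∈ rest.reverse.edges := by rw [hq]; simp
    rw [Walk.edges_reverse, List.mem_reverse] at this
    rw [show s(m,y) = s(m,z) by rw [hyz]]
    exact this

/-- A degree-one vertex is on no cycle. -/
lemma leaf_not_in_cycle {m x' : V} (hm1 : ∀ t, G.Adj m t → t = x')
    {w : V} {c : G.Walk w w} (hc : c.IsCycle) : m ∉ c.support := by
  intro hm
  obtain ⟨y, z, hyz, hy, hz⟩ := cycle_two_nbrs hc hm
  exact hyz ((hm1 y hy).trans (hm1 z hz).symm)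

end CactusAux

namespace CactusAux
variable {V : Type*} [DecidableEq V] {G : SimpleGraph V}
open SimpleGraph.Walk

section AddEdgeA
variable {u b x w : V}
variable (hub : u ≠ b) (hux : G.Adj u x) (hu1 : ∀ t, G.Adj u t → t = x)
  (hbw : G.Adj b w) (hb1 : ∀ t, G.Adj b t → t = w)
  (hbx : b ≠ x) (huw : u ≠ w)

local notation "Ha" =>
  SimpleGraph.fromEdgeSet ((G.edgeSet \ {s(b,w)}) ∪ {s(u,b), s(b,x)})

include hub hbx in
lemma leafEdge_edgeSet :
    (Ha).edgeSet = (G.edgeSet \ {s(b,w)}) ∪ {s(u,b), s(b,x)} := by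
  rw [SimpleGraph.edgeSet_fromEdgeSet]
  ext e
  simp only [Set.mem_diff, Set.mem_union, Set.mem_singleton_iff, Set.mem_setOf_eq,
    Set.mem_insert_iff]
  constructor
  · tauto
  · rintro (⟨h1, h2⟩ | (rfl | rfl))
    · exact ⟨Or.inl ⟨h1, h2⟩, G.not_isDiag_of_mem_edgeSet h1⟩
    · exact ⟨Or.inr (Or.inl rfl), by simpa using hub⟩
    · exact ⟨Or.inr (Or.inr rfl), by simpa using hbx⟩

include hub hbx hb1 in
lemma leafEdge_adj_b : ∀ t, (Ha).Adj b t ↔ (t = u ∨ t = x) := by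
  intro t
  rw [SimpleGraph.fromEdgeSet_adj]
  constructor
  · rintro ⟨(⟨h1, h2⟩ | (h1 | h1)), hne⟩
    · exfalso
      apply h2
      rw [Set.mem_singleton_iff, (hb1 t ((SimpleGraph.mem_edgeSet G).mp h1))]
    · rcases Sym2.eq_iff.mp h1 with ⟨h3, -⟩ | ⟨-, h3⟩
      · exact absurd h3.symm hub
      · exact Or.inl h3
    · rcases Sym2.eq_iff.mp h1 with ⟨-, h3⟩ | ⟨h3, -⟩
      · exact Or.inr h3
      · exact absurd h3 hbx
  · rintro (rfl | rfl)
    · exact ⟨Or.inr (Or.inl (Sym2.eq_swap)), fun h => hub h.symm⟩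
    · exact ⟨Or.inr (Or.inr rfl), hbx⟩

include hub hbx huw hux hu1 in
lemma leafEdge_adj_u : ∀ t, (Ha).Adj u t ↔ (t = x ∨ t = b) := by
  intro t
  rw [SimpleGraph.fromEdgeSet_adj]
  constructor
  · rintro ⟨(⟨h1, h2⟩ | (h1 | h1)), hne⟩
    · exact Or.inl (hu1 t ((SimpleGraph.mem_edgeSet G).mp h1))
    · rcases Sym2.eq_iff.mp h1 with ⟨-, h3⟩ | ⟨h3, -⟩
      · exact Or.inr h3
      · exact absurd h3 hub
    · rcases Sym2.eq_iff.mp h1 with ⟨h3, -⟩ | ⟨h3, -⟩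
      · exact absurd h3 hub
      · exact absurd h3 hux.ne
  · rintro (rfl | rfl)
    · refine ⟨Or.inl ⟨hux, ?_⟩, hux.ne⟩
      rw [Set.mem_singleton_iff]
      intro h
      rcases Sym2.eq_iff.mp h with ⟨h3, -⟩ | ⟨h3, -⟩
      · exact hub h3
      · exact huw h3
    · exact ⟨Or.inr (Or.inl rfl), hub⟩

include hub hbx hb1 huw hux hu1 in
lemma leafEdge_tri (h : (Ha).Adj b u) (rest : (Ha).Walk u b)
    (hcyc : (Walk.cons h rest).IsCycle) :
    (Walk.cons h rest).support.toFinset = ({u, b, x} : Finset V) ∧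
    (Walk.cons h rest).edges.toFinset
      = ({s(u,b), s(u,x), s(b,x)} : Finset (Sym2 V)) := by
  obtain ⟨hrp, hre⟩ := (Walk.cons_isCycle_iff rest h).mp hcyc
  obtain ⟨t, ht, q, hq⟩ := Walk.exists_eq_cons_of_ne hub rest
  have htx : t = x := by
    rcases (leafEdge_adj_u hub hux hu1 hbx huw t).mp ht with h' | h'
    · exact h'
    · exfalso
      apply hre
      rw [hq, Walk.edges_cons]
      rw [show s(b,u) = s(u,t) by rw [h']; exact Sym2.eq_swap]
      exact List.mem_cons_self
  have htx' : x = t := htx.symm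
  subst htx'
  have hqp : q.IsPath ∧ u ∉ q.support := by
    rw [hq, Walk.cons_isPath_iff] at hrp
    exact hrp
  obtain ⟨z, hz, q2, hq2⟩ := Walk.exists_eq_cons_of_ne hbx q.reverse
  have hzx : z = x := by
    rcases (leafEdge_adj_b hub hb1 hbx z).mp hz with h' | h'
    · exfalso
      apply hqp.2
      have : z ∈ q.reverse.support := by rw [hq2]; simp
      rw [Walk.support_reverse, List.mem_reverse] at this
      rwa [h'] at this
    · exact h'
  have hzx' : x = z := hzx.symm
  subst hzx'
  have hq2nil : q2 = Walk.nil := by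
    have h1 : q.reverse.IsPath := hqp.1.reverse
    rw [hq2, Walk.cons_isPath_iff] at h1
    exact Walk.isPath_iff_eq_nil.mp h1.1
  have hqsup : q.support = [x, b] := by
    have h1 : q.reverse.support = [b, x] := by rw [hq2, hq2nil]; simp
    rw [← List.reverse_reverse q.support, ← Walk.support_reverse, h1]
    rfl
  have hqedg : q.edges = [s(b,x)] := by
    have h1 : q.reverse.edges = [s(b,x)] := by rw [hq2, hq2nil]; simp
    rw [← List.reverse_reverse q.edges, ← Walk.edges_reverse, h1]
    rfl
  constructor
  · rw [Walk.support_cons, hq, Walk.support_cons, hqsup]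
    ext s
    simp only [List.toFinset_cons, List.toFinset_nil, insert_empty_eq, Finset.mem_insert,
      Finset.mem_singleton, List.mem_toFinset, List.mem_cons, List.mem_singleton,
      List.not_mem_nil, or_false]
    constructor
    · rintro (rfl | rfl | rfl | rfl) <;> tauto
    · rintro (rfl | rfl | rfl) <;> tauto
  · rw [Walk.edges_cons, hq, Walk.edges_cons, hqedg]
    rw [show s(b,u) = s(u,b) from Sym2.eq_swap]
    simp

include hub hbx hb1 huw hux hu1 in
lemma leafEdge_cycle_classify {a : V} (c : (Ha).Walk a a) (hc : c.IsCycle) :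
    ((∀ e ∈ c.edges, e ∈ G.edgeSet) ∧ b ∉ c.support) ∨
    (c.support.toFinset = ({u, b, x} : Finset V) ∧
     c.edges.toFinset = ({s(u,b), s(u,x), s(b,x)} : Finset (Sym2 V))) := by
  by_cases hbmem : b ∈ c.support
  · right
    have hcr : (c.rotate _ hbmem).IsCycle := hc.rotate hbmem
    rw [← rotate_support_toFinset hc hbmem, ← rotate_edges_toFinset c hbmem]
    set c1 := c.rotate _ hbmem with hdef
    clear_value c1
    clear hdef hbmem hc
    cases c1 with
    | nil => exact absurd hcr (by simp [Walk.isCycle_def])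
    | @cons _ y _ h rest =>
      obtain ⟨hrp, hre⟩ := (Walk.cons_isCycle_iff rest h).mp hcr
      rcases (leafEdge_adj_b hub hb1 hbx y).mp h with hy | hy
      · subst hy
        exact leafEdge_tri hub hux hu1 hb1 hbx huw h rest hcr
      · subst hy
        obtain ⟨z, hz, q, hq⟩ := Walk.exists_eq_cons_of_ne hbx rest.reverse
        have hzu : z = u := by
          rcases (leafEdge_adj_b hub hb1 hbx z).mp hz with h' | h'
          · exact h'
          · exfalso
            apply hre
            have : s(b,z) ∈ rest.reverse.edges := by rw [hq]; simp
            rw [Walk.edges_reverse, List.mem_reverse] at this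
            rwa [h'] at this
        subst hzu
        have hc2 : (Walk.cons h rest).reverse
            = Walk.cons hz (q.append (Walk.cons h.symm Walk.nil)) := by
          rw [Walk.reverse_cons, hq, Walk.cons_append]
        have hcyc2 : (Walk.cons hz (q.append (Walk.cons h.symm Walk.nil))).IsCycle := by
          rw [← hc2]; exact isCycle_reverse hcr
        have hres := leafEdge_tri hub hux hu1 hb1 hbx huw hz _ hcyc2
        rw [← reverse_support_toFinset (Walk.cons h rest),
          ← reverse_edges_toFinset (Walk.cons h rest), hc2]
        exact hres
  · left
    refine ⟨fun e he => ?_, hbmem⟩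
    have h1 := c.edges_subset_edgeSet he
    rw [leafEdge_edgeSet hub hbx] at h1
    rcases h1 with h1 | h1
    · exact h1.1
    · exfalso
      rcases h1 with h1 | h1
      · apply hbmem
        subst h1
        exact c.snd_mem_support_of_mem_edges he
      · apply hbmem
        rw [Set.mem_singleton_iff] at h1
        subst h1
        exact c.fst_mem_support_of_mem_edges he

include hub hbx hb1 huw hux hu1 in
lemma leafEdge_cross {a : V} (c : G.Walk a a) (hc : c.IsCycle) :
    (c.support.toFinset ∩ ({u, b, x} : Finset V)).card ≤ 1 := by
  have hu' := leaf_not_in_cycle hu1 hc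
  have hb' := leaf_not_in_cycle hb1 hc
  refine le_trans (Finset.card_le_card (fun t ht => ?_)) (Finset.card_singleton x).le
  rw [Finset.mem_inter, List.mem_toFinset] at ht
  obtain ⟨hts, htm⟩ := ht
  simp only [Finset.mem_insert, Finset.mem_singleton] at htm
  rw [Finset.mem_singleton]
  rcases htm with h | h | h
  · exact absurd (h ▸ hts) hu'
  · exact absurd (h ▸ hts) hb'
  · exact h

include hub hbx hb1 huw hux hu1 in
lemma leafEdge_isCactus
    (hcac : ∀ ⦃a c : V⦄ (c₁ : G.Walk a a) (c₂ : G.Walk c c), c₁.IsCycle → c₂.IsCycle →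
      c₁.edges.toFinset ≠ c₂.edges.toFinset →
      (c₁.support.toFinset ∩ c₂.support.toFinset).card ≤ 1) :
    ∀ ⦃a c : V⦄ (c₁ : (Ha).Walk a a) (c₂ : (Ha).Walk c c), c₁.IsCycle → c₂.IsCycle →
      c₁.edges.toFinset ≠ c₂.edges.toFinset →
      (c₁.support.toFinset ∩ c₂.support.toFinset).card ≤ 1 := by
  intro a c c₁ c₂ h1 h2 hne
  rcases leafEdge_cycle_classify hub hux hu1 hb1 hbx huw c₁ h1 with hl1 | hr1 <;>
    rcases leafEdge_cycle_classify hub hux hu1 hb1 hbx huw c₂ h2 with hl2 | hr2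
  · have := hcac (c₁.transfer G hl1.1) (c₂.transfer G hl2.1) (h1.transfer hl1.1)
      (h2.transfer hl2.1) (by rw [Walk.edges_transfer, Walk.edges_transfer]; exact hne)
    rwa [Walk.support_transfer, Walk.support_transfer] at this
  · rw [hr2.1, ← Walk.support_transfer c₁ hl1.1]
    exact leafEdge_cross hub hux hu1 hb1 hbx huw _ (h1.transfer hl1.1)
  · rw [hr1.1, Finset.inter_comm, ← Walk.support_transfer c₂ hl2.1]
    exact leafEdge_cross hub hux hu1 hb1 hbx huw _ (h2.transfer hl2.1)
  · exact absurd (hr1.2.trans hr2.2.symm) hne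

include hub hbx hb1 huw hux hu1 in
lemma leafEdge_connected (hconn : G.Connected) : (Ha).Connected := by
  have hadj : (Ha).Adj u b := (leafEdge_adj_u hub hux hu1 hbx huw b).mpr (Or.inr rfl)
  have key : ∀ a : V, (Ha).Reachable a u := by
    intro a
    by_cases hab : a = b
    · subst hab
      exact (hadj.symm).reachable
    by_cases hau : a = u
    · subst hau
      exact SimpleGraph.Reachable.refl _
    obtain ⟨p0⟩ := hconn.preconnected a u
    have hp : (p0.toPath : G.Path a u).1.IsPath := (p0.toPath).2
    set p := (p0.toPath : G.Path a u).1 with hpdef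
    have hbnot : b ∉ p.support := by
      intro hmem
      obtain ⟨y, z, hyz, hy, hz⟩ := internal_two_nbrs hp hmem
        (fun hh => hab hh.symm) (fun hh => hub hh.symm)
      exact hyz ((hb1 y hy).trans (hb1 z hz).symm)
    have hedges : ∀ e ∈ p.edges, e ∈ (Ha).edgeSet := by
      intro e he
      rw [leafEdge_edgeSet hub hbx]
      left
      refine ⟨p.edges_subset_edgeSet he, ?_⟩
      rw [Set.mem_singleton_iff]
      rintro rfl
      exact hbnot (p.fst_mem_support_of_mem_edges he)
    exact ⟨p.transfer _ hedges⟩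
  rw [SimpleGraph.connected_iff]
  exact ⟨fun a c => (key a).trans (key c).symm, hconn.nonempty⟩

end AddEdgeA
end CactusAux

namespace CactusAux
variable {V : Type*} {G : SimpleGraph V}
open SimpleGraph.Walk

lemma stuck_walk {u b : V}
    (hS : ∀ s : V, (s = u ∨ s = b) → ∀ t, G.Adj s t → (t = u ∨ t = b)) :
    ∀ {a c : V} (p : G.Walk a c), (a = u ∨ a = b) → (c = u ∨ c = b) := by
  intro a c p
  induction p with
  | nil => exact id
  | cons h q ih => exact fun ha => ih (hS _ ha _ h)

lemma leaves_not_K2 {u b x w : V} (hconn : G.Connected)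
    (hz : ∃ z : V, z ≠ u ∧ z ≠ b)
    (hu1 : ∀ t, G.Adj u t → t = x) (hb1 : ∀ t, G.Adj b t → t = w)
    (hAdj : G.Adj u b) : False := by
  obtain ⟨z, hzu, hzb⟩ := hz
  have hS : ∀ s : V, (s = u ∨ s = b) → ∀ t, G.Adj s t → (t = u ∨ t = b) := by
    rintro s (rfl | rfl) t ht
    · right; rw [hu1 t ht, ← hu1 b hAdj]
    · left; rw [hb1 t ht, ← hb1 u hAdj.symm]
  obtain ⟨p⟩ := hconn.preconnected u z
  rcases stuck_walk hS p (Or.inl rfl) with h | h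
  · exact hzu h
  · exact hzb h

end CactusAux

theorem maximal_cactus_degree_properties (n : ℕ) (hn : 4 ≤ n)
    (G : SimpleGraph (Fin n)) (hconn : G.Connected)
    (htri : ∀ (u : Fin n) (c : G.Walk u u), c.IsCycle → c.length = 3)
    (hcac : IsCactus G)
    (hmax : ∀ H : SimpleGraph (Fin n), H.Connected → IsCactus H →
      H.edgeSet.ncard ≤ G.edgeSet.ncard) :
    {v : Fin n | (G.neighborSet v).ncard ≤ 1}.ncard ≤ 1 ∧
      (2 ≤ {v : Fin n | 3 ≤ (G.neighborSet v).ncard}.ncard →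
        ∃ a b : Fin n, 3 ≤ (G.neighborSet a).ncard ∧
          3 ≤ (G.neighborSet b).ncard ∧ G.Adj a b) := by
  classical
  have hnontriv : Nontrivial (Fin n) := by
    refine ⟨⟨0, by omega⟩, ⟨1, by omega⟩, ?_⟩
    simp [Fin.ext_iff]
  have hnbr : ∀ m : Fin n, ∃ y, G.Adj m y := by
    intro m
    obtain ⟨z, hz⟩ := exists_ne m
    obtain ⟨p⟩ := hconn.preconnected m z
    obtain ⟨y, hy, -, -⟩ := Walk.exists_eq_cons_of_ne (Ne.symm hz) p
    exact ⟨y, hy⟩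
  have hleaf : ∀ m : Fin n, (G.neighborSet m).ncard ≤ 1 →
      ∃ xm, G.Adj m xm ∧ ∀ t, G.Adj m t → t = xm := by
    intro m hm
    obtain ⟨y, hy⟩ := hnbr m
    refine ⟨y, hy, fun t ht => ?_⟩
    exact (Set.ncard_le_one_iff (Set.toFinite _)).mp hm
      ((G.mem_neighborSet m t).mpr ht) ((G.mem_neighborSet m y).mpr hy)
  constructor
  · -- at most one vertex of degree ≤ 1
    by_contra hA
    push_neg at hA
    obtain ⟨u, b, hu, hb, hub⟩ : ∃ u b : Fin n, (G.neighborSet u).ncard ≤ 1 ∧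
        (G.neighborSet b).ncard ≤ 1 ∧ u ≠ b := by
      by_contra h
      push_neg at h
      have hle : {v : Fin n | (G.neighborSet v).ncard ≤ 1}.ncard ≤ 1 :=
        (Set.ncard_le_one_iff (Set.toFinite _)).mpr (fun ha hb => h _ _ ha hb)
      omega
    obtain ⟨x, hux, hu1⟩ := hleaf u hu
    obtain ⟨w, hbw, hb1⟩ := hleaf b hb
    have hzex : ∃ z : Fin n, z ≠ u ∧ z ≠ b := by
      by_contra h
      push_neg at h
      have hsub : (Finset.univ : Finset (Fin n)) ⊆ {u, b} := by
        intro z _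
        simp only [Finset.mem_insert, Finset.mem_singleton]
        by_cases hzu : z = u
        · exact Or.inl hzu
        · exact Or.inr (h z hzu)
      have hcard := Finset.card_le_card hsub
      rw [Finset.card_univ, Fintype.card_fin] at hcard
      have : ({u, b} : Finset (Fin n)).card ≤ 2 :=
        le_trans (Finset.card_insert_le _ _) (by simp)
      omega
    have hbx : b ≠ x := fun hbxx =>
      CactusAux.leaves_not_K2 hconn hzex hu1 hb1 (by rw [hbxx]; exact hux)
    have huw : u ≠ w := fun huww =>
      CactusAux.leaves_not_K2 hconn hzex hu1 hb1
        (by have h' := hbw; rw [← huww] at h'; exact h'.symm)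
    set H := SimpleGraph.fromEdgeSet ((G.edgeSet \ {s(b,w)}) ∪ {s(u,b), s(b,x)}) with hHdef
    have hconn' : H.Connected :=
      CactusAux.leafEdge_connected (hub := hub) (hux := hux) (hu1 := hu1)
        (hb1 := hb1) (hbx := hbx) (huw := huw) hconn
    have hcac' : IsCactus H :=
      CactusAux.leafEdge_isCactus (hub := hub) (hux := hux) (hu1 := hu1)
        (hb1 := hb1) (hbx := hbx) (huw := huw) hcac
    have hsuB : s(u,b) ∉ G.edgeSet := by
      intro hm
      exact hbx (hu1 b ((G.mem_edgeSet).mp hm))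
    have hcount : H.edgeSet.ncard = G.edgeSet.ncard + 1 := by
      rw [hHdef, CactusAux.leafEdge_edgeSet hub hbx]
      by_cases hxw : x = w
      · subst hxw
        have hset : (G.edgeSet \ {s(b,x)}) ∪ {s(u,b), s(b,x)}
            = insert s(u,b) G.edgeSet := by
          ext e
          simp only [Set.mem_union, Set.mem_diff, Set.mem_singleton_iff, Set.mem_insert_iff]
          constructor
          · rintro (⟨h1, -⟩ | (rfl | rfl))
            · exact Or.inr h1
            · exact Or.inl rfl
            · exact Or.inr ((G.mem_edgeSet).mpr hbw)
          · rintro (rfl | h1)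
            · exact Or.inr (Or.inl rfl)
            · by_cases he : e = s(b,x)
              · exact Or.inr (Or.inr he)
              · exact Or.inl ⟨h1, he⟩
        rw [hset, Set.ncard_insert_of_notMem hsuB (Set.toFinite _)]
      · have hsbx : s(b,x) ∉ G.edgeSet := fun hm => hxw (hb1 x ((G.mem_edgeSet).mp hm))
        have hset : (G.edgeSet \ {s(b,w)}) ∪ {s(u,b), s(b,x)}
            = insert s(u,b) (insert s(b,x) (G.edgeSet \ {s(b,w)})) := by
          ext e
          simp only [Set.mem_union, Set.mem_diff, Set.mem_singleton_iff, Set.mem_insert_iff]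
          tauto
        rw [hset]
        have h1m : s(b,x) ∉ (G.edgeSet \ {s(b,w)}) := fun hm => hsbx hm.1
        have h2m : s(u,b) ∉ insert s(b,x) (G.edgeSet \ {s(b,w)}) := by
          simp only [Set.mem_insert_iff]
          rintro (he | hm)
          · rcases Sym2.eq_iff.mp he with ⟨h3, -⟩ | ⟨h3, -⟩
            · exact hub h3
            · exact hux.ne h3
          · exact hsuB hm.1
        rw [Set.ncard_insert_of_notMem h2m (Set.toFinite _),
          Set.ncard_insert_of_notMem h1m (Set.toFinite _),
          Set.ncard_diff_singleton_of_mem ((G.mem_edgeSet).mpr hbw)]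
        have hpos : 0 < G.edgeSet.ncard := by
          rw [Set.ncard_pos (Set.toFinite _)]
          exact ⟨_, (G.mem_edgeSet).mpr hbw⟩
        omega
    have := hmax H hconn' hcac'
    omega
  · -- adjacent pair of large-degree vertices
    intro h2
    by_contra hno
    push_neg at hno
    obtain ⟨uu, vv, huD, hvD, huv⟩ : ∃ a b : Fin n, 3 ≤ (G.neighborSet a).ncard ∧
        3 ≤ (G.neighborSet b).ncard ∧ a ≠ b := by
      by_contra h
      push_neg at h
      have hle : {v : Fin n | 3 ≤ (G.neighborSet v).ncard}.ncard ≤ 1 :=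
        (Set.ncard_le_one_iff (Set.toFinite _)).mpr (fun ha hb => h _ _ ha hb)
      omega
    have hdist0 : G.dist uu vv ≠ 0 := fun h => huv ((hconn.dist_eq_zero_iff).mp h)
    have hdist1 : G.dist uu vv ≠ 1 := fun h =>
      hno uu vv huD hvD (SimpleGraph.dist_eq_one_iff_adj.mp h)
    obtain ⟨p, hp⟩ := SimpleGraph.exists_walk_of_dist_ne_zero hdist0
    obtain ⟨x1, h1, p', hp'⟩ := Walk.exists_eq_cons_of_ne huv p
    have hx1v : x1 ≠ vv := by
      rintro rfl
      exact hdist1 (SimpleGraph.dist_eq_one_iff_adj.mpr h1)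
    obtain ⟨x2, h2a, q, hq⟩ := Walk.exists_eq_cons_of_ne hx1v p'
    have hlen : p.length = q.length + 2 := by
      rw [hp', hq]
      simp only [Walk.length_cons]
    have hne02 : uu ≠ x2 := by
      intro h
      subst h
      have := SimpleGraph.dist_le q
      omega
    have hnadj : ¬ G.Adj uu x2 := by
      intro had
      have := SimpleGraph.dist_le (Walk.cons had q)
      rw [Walk.length_cons] at this
      omega
    have hx1deg : ¬ 3 ≤ (G.neighborSet x1).ncard := fun h3 => hno uu x1 huD h3 h1
    have hnbrs : ∀ t, G.Adj x1 t → t = uu ∨ t = x2 := by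
      intro t ht
      have hsub : ({uu, x2} : Set (Fin n)) ⊆ G.neighborSet x1 := by
        rintro s (rfl | rfl)
        · exact (G.mem_neighborSet x1 s).mpr h1.symm
        · exact (G.mem_neighborSet x1 _).mpr h2a
      have heq : ({uu, x2} : Set (Fin n)) = G.neighborSet x1 :=
        Set.eq_of_subset_of_ncard_le hsub
          (by rw [Set.ncard_pair hne02]; omega) (Set.toFinite _)
      have : t ∈ ({uu, x2} : Set (Fin n)) := by
        rw [heq]
        exact (G.mem_neighborSet x1 t).mpr ht
      simpa using this
    set H := SimpleGraph.fromEdgeSet (G.edgeSet ∪ {s(uu,x2)}) with hHdef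
    have hle : G ≤ H := by
      intro a c hac
      rw [hHdef, SimpleGraph.fromEdgeSet_adj]
      exact ⟨Or.inl ((G.mem_edgeSet).mpr hac), hac.ne⟩
    have hconn' : H.Connected := hconn.mono hle
    have hcac' : IsCactus H :=
      CactusAux.addEdge_isCactus htri h1.symm h2a hne02 hnadj hnbrs hcac
    have hcount : H.edgeSet.ncard = G.edgeSet.ncard + 1 := by
      rw [hHdef, CactusAux.addEdge_edgeSet hne02, Set.union_singleton,
        Set.ncard_insert_of_notMem (fun hm => hnadj ((G.mem_edgeSet).mp hm))
          (Set.toFinite _)]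
    have := hmax H hconn' hcac'
    omega
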